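/- For every integer k and every open subset U of SL₂(ℝ) containing SO₂(ℝ), there exists a continuous function f : SL₂(ℝ) → ℂ with compact support contained in U such that f(1) = 1 and f(e(θ₁) · g · e(θ₂)) = e^{ik(θ₁+θ₂)} · f(g) for all g ∈ SL₂(ℝ) and all θ₁, θ₂ ∈ ℝ. -/

import Mathlib

open Real Matrix

/-- The rotation matrix `e(θ)` with rows `(cos θ, sin θ)` and `(-sin θ, cos θ)`. -/
noncomputable def rotMat (θ : ℝ) : Matrix (Fin 2) (Fin 2) ℝ :=
  !![Real.cos θ, Real.sin θ; -Real.sin θ, Real.cos θ]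

theorem rotMat_det (θ : ℝ) : (rotMat θ).det = 1 := by
  rw [rotMat, Matrix.det_fin_two_of]
  linear_combination Real.sin_sq_add_cos_sq θ

/-- The rotation `e(θ)` as an element of `SL₂(ℝ)`. -/
noncomputable def rotSL (θ : ℝ) : Matrix.SpecialLinearGroup (Fin 2) ℝ :=
  ⟨rotMat θ, rotMat_det θ⟩

/-- `SL₂(ℝ)` with the topology induced from the space of `2 × 2` real matrices. -/
instance : TopologicalSpace (Matrix.SpecialLinearGroup (Fin 2) ℝ) :=
  TopologicalSpace.induced (fun A => (A : Matrix (Fin 2) (Fin 2) ℝ)) inferInstance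


/-! ### Auxiliary definitions and lemmas -/

noncomputable def wc (M : Matrix (Fin 2) (Fin 2) ℝ) : ℂ :=
  ⟨M 0 0 + M 1 1, M 0 1 - M 1 0⟩

def nn (M : Matrix (Fin 2) (Fin 2) ℝ) : ℝ :=
  (M 0 0)^2 + (M 0 1)^2 + (M 1 0)^2 + (M 1 1)^2

lemma wc_eq (M : Matrix (Fin 2) (Fin 2) ℝ) :
    wc M = ((M 0 0 + M 1 1 : ℝ) : ℂ) + ((M 0 1 - M 1 0 : ℝ) : ℂ) * Complex.I := by
  apply Complex.ext <;> simp [wc]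

lemma wc_rot_mul (θ : ℝ) (M : Matrix (Fin 2) (Fin 2) ℝ) :
    wc (rotMat θ * M) = Complex.exp (θ * Complex.I) * wc M := by
  rw [Complex.exp_mul_I]
  apply Complex.ext <;>
    simp [wc, rotMat, Matrix.mul_apply, Fin.sum_univ_two, Complex.cos_ofReal_re,
      ← Complex.ofReal_cos, ← Complex.ofReal_sin, Complex.add_re, Complex.add_im,
      Complex.mul_re, Complex.mul_im] <;> ring

lemma wc_mul_rot (θ : ℝ) (M : Matrix (Fin 2) (Fin 2) ℝ) :
    wc (M * rotMat θ) = Complex.exp (θ * Complex.I) * wc M := by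
  rw [Complex.exp_mul_I]
  apply Complex.ext <;>
    simp [wc, rotMat, Matrix.mul_apply, Fin.sum_univ_two,
      ← Complex.ofReal_cos, ← Complex.ofReal_sin, Complex.add_re, Complex.add_im,
      Complex.mul_re, Complex.mul_im] <;> ring

lemma nn_rot_mul (θ : ℝ) (M : Matrix (Fin 2) (Fin 2) ℝ) :
    nn (rotMat θ * M) = nn M := by
  simp only [nn, rotMat, Matrix.mul_apply, Fin.sum_univ_two]
  simp [Matrix.of_apply, cons_val', cons_val_zero, cons_val_one, head_cons]
  linear_combination ((M 0 0)^2 + (M 0 1)^2 + (M 1 0)^2 + (M 1 1)^2) * Real.sin_sq_add_cos_sq θ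

lemma nn_mul_rot (θ : ℝ) (M : Matrix (Fin 2) (Fin 2) ℝ) :
    nn (M * rotMat θ) = nn M := by
  simp only [nn, rotMat, Matrix.mul_apply, Fin.sum_univ_two]
  simp [Matrix.of_apply, cons_val', cons_val_zero, cons_val_one, head_cons]
  linear_combination ((M 0 0)^2 + (M 0 1)^2 + (M 1 0)^2 + (M 1 1)^2) * Real.sin_sq_add_cos_sq θ

lemma wc_ne_zero {M : Matrix (Fin 2) (Fin 2) ℝ} (h : M.det = 1) : wc M ≠ 0 := by
  rw [Matrix.det_fin_two] at h
  intro hw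
  rw [Complex.ext_iff] at hw
  simp only [wc, Complex.zero_re, Complex.zero_im] at hw
  obtain ⟨h1, h2⟩ := hw
  have key : -(M 0 0)^2 - (M 0 1)^2 = 1 := by
    linear_combination h - M 0 0 * h1 - M 0 1 * h2
  nlinarith [sq_nonneg (M 0 0), sq_nonneg (M 0 1)]

lemma nn_ge_two {M : Matrix (Fin 2) (Fin 2) ℝ} (h : M.det = 1) : 2 ≤ nn M := by
  rw [Matrix.det_fin_two] at h
  simp only [nn]
  nlinarith [sq_nonneg (M 0 0 - M 1 1), sq_nonneg (M 0 1 + M 1 0)]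

lemma eq_rot_of_nn_le_two {M : Matrix (Fin 2) (Fin 2) ℝ} (h : M.det = 1) (hn : nn M ≤ 2) :
    ∃ θ : ℝ, M = rotMat θ := by
  rw [Matrix.det_fin_two] at h
  simp only [nn] at hn
  have hd : M 1 1 = M 0 0 := by nlinarith [sq_nonneg (M 0 0 - M 1 1), sq_nonneg (M 0 1 + M 1 0)]
  have hc : M 1 0 = -M 0 1 := by nlinarith [sq_nonneg (M 0 0 - M 1 1), sq_nonneg (M 0 1 + M 1 0)]
  have habs : (M 0 0)^2 + (M 0 1)^2 = 1 := by
    linear_combination h - M 0 0 * hd + M 0 1 * hc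
  set z : ℂ := ⟨M 0 0, M 0 1⟩ with hz
  have hzne : z ≠ 0 := by
    intro h0; rw [Complex.ext_iff] at h0
    simp only [hz, Complex.zero_re, Complex.zero_im] at h0
    nlinarith [h0.1, h0.2]
  have habsz : ‖z‖ = 1 := by
    have : ‖z‖ ^ 2 = 1 := by
      rw [Complex.sq_norm, Complex.normSq_mk]; nlinarith
    nlinarith [norm_nonneg z]
  refine ⟨Complex.arg z, ?_⟩
  have hcos : Real.cos (Complex.arg z) = M 0 0 := by
    rw [Complex.cos_arg hzne, habsz]; simp [hz]
  have hsin : Real.sin (Complex.arg z) = M 0 1 := by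
    rw [Complex.sin_arg, habsz]; simp [hz]
  ext i j
  fin_cases i <;> fin_cases j <;> simp [rotMat, hcos, hsin, hd, hc]

lemma continuous_nn : Continuous nn := by
  unfold nn; fun_prop

lemma continuous_sl_coe :
    Continuous (fun A : Matrix.SpecialLinearGroup (Fin 2) ℝ => (A : Matrix (Fin 2) (Fin 2) ℝ)) :=
  continuous_induced_dom

lemma inducing_sl_coe :
    Topology.IsInducing
      (fun A : Matrix.SpecialLinearGroup (Fin 2) ℝ => (A : Matrix (Fin 2) (Fin 2) ℝ)) :=
  ⟨rfl⟩

lemma isCompact_nn_le (c : ℝ) :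
    IsCompact {g : Matrix.SpecialLinearGroup (Fin 2) ℝ | nn ↑g ≤ c} := by
  rw [inducing_sl_coe.isCompact_iff]
  have himg : (fun A : Matrix.SpecialLinearGroup (Fin 2) ℝ => (A : Matrix (Fin 2) (Fin 2) ℝ)) ''
      {g | nn ↑g ≤ c} = {M : Matrix (Fin 2) (Fin 2) ℝ | M.det = 1 ∧ nn M ≤ c} := by
    ext M
    constructor
    · rintro ⟨g, hg, rfl⟩; exact ⟨g.2, hg⟩
    · rintro ⟨h1, h2⟩; exact ⟨⟨M, h1⟩, h2, rfl⟩
  rw [himg]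
  have hsub : {M : Matrix (Fin 2) (Fin 2) ℝ | M.det = 1 ∧ nn M ≤ c} ⊆
      Set.univ.pi (fun _ : Fin 2 => Set.univ.pi fun _ : Fin 2 => Set.Icc (-(c+1)) (c+1)) := by
    rintro M ⟨-, h2⟩
    intro i _ j _
    simp only [Set.mem_Icc]
    have hsq : (M i j)^2 ≤ c := by
      have h00 := sq_nonneg (M 0 0); have h01 := sq_nonneg (M 0 1)
      have h10 := sq_nonneg (M 1 0); have h11 := sq_nonneg (M 1 1)
      fin_cases i <;> fin_cases j <;> simp only [nn] at h2 <;> simp <;> nlinarith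
    constructor <;> nlinarith [sq_nonneg (M i j + 1), sq_nonneg (M i j - 1)]
  refine IsCompact.of_isClosed_subset ?_ ?_ hsub
  · exact isCompact_univ_pi fun _ => isCompact_univ_pi fun _ => isCompact_Icc
  · refine IsClosed.inter ?_ ?_
    · exact isClosed_eq (Continuous.matrix_det continuous_id) continuous_const
    · exact isClosed_le continuous_nn continuous_const

/-- For every integer `k` and every open neighbourhood `U` of `SO₂(ℝ)` in `SL₂(ℝ)` there is a
continuous, compactly supported function `f : SL₂(ℝ) → ℂ` with support contained in `U`,
with `f(1) = 1`, transforming under `SO₂(ℝ)` on both sides by the character `e(θ) ↦ e^{ikθ}`. -/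
theorem exists_so2_equivariant_bump (k : ℤ) (U : Set (Matrix.SpecialLinearGroup (Fin 2) ℝ))
    (hU : IsOpen U) (hSO : {g : Matrix.SpecialLinearGroup (Fin 2) ℝ | ∃ θ : ℝ, g = rotSL θ} ⊆ U) :
    ∃ f : Matrix.SpecialLinearGroup (Fin 2) ℝ → ℂ,
      Continuous f ∧ HasCompactSupport f ∧ tsupport f ⊆ U ∧ f 1 = 1 ∧
      ∀ (g : Matrix.SpecialLinearGroup (Fin 2) ℝ) (θ₁ θ₂ : ℝ),
        f (rotSL θ₁ * g * rotSL θ₂) = Complex.exp (Complex.I * k * (θ₁ + θ₂)) * f g := by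
  classical
  have hn_cont : Continuous
      (fun g : Matrix.SpecialLinearGroup (Fin 2) ℝ => nn ↑g) :=
    continuous_nn.comp continuous_sl_coe
  have hK : ∀ g : Matrix.SpecialLinearGroup (Fin 2) ℝ, nn ↑g ≤ 2 → g ∈ U := by
    intro g hg
    obtain ⟨θ, hθ⟩ := eq_rot_of_nn_le_two g.2 hg
    exact hSO ⟨θ, Subtype.ext hθ⟩
  obtain ⟨ε, hε0, hεU⟩ : ∃ ε : ℝ, 0 < ε ∧
      ∀ g : Matrix.SpecialLinearGroup (Fin 2) ℝ, nn ↑g ≤ 2 + ε → g ∈ U := by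
    by_cases hD : ({g : Matrix.SpecialLinearGroup (Fin 2) ℝ | nn ↑g ≤ 3} ∩ Uᶜ).Nonempty
    · have hDc : IsCompact ({g : Matrix.SpecialLinearGroup (Fin 2) ℝ | nn ↑g ≤ 3} ∩ Uᶜ) :=
        (isCompact_nn_le 3).inter_right hU.isClosed_compl
      obtain ⟨g₀, hg₀mem, hg₀min⟩ := hDc.exists_isMinOn hD hn_cont.continuousOn
      have hm : 2 < nn (↑g₀ : Matrix (Fin 2) (Fin 2) ℝ) := by
        rcases lt_or_ge 2 (nn (↑g₀ : Matrix (Fin 2) (Fin 2) ℝ)) with h | h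
        · exact h
        · exact absurd (hK g₀ h) hg₀mem.2
      refine ⟨min (1/2) ((nn (↑g₀ : Matrix (Fin 2) (Fin 2) ℝ) - 2)/2),
        lt_min (by norm_num) (by linarith), ?_⟩
      intro g hg
      by_contra hgU
      have h3 : nn (↑g : Matrix (Fin 2) (Fin 2) ℝ) ≤ 3 := by
        have := min_le_left (1/2 : ℝ) ((nn (↑g₀ : Matrix (Fin 2) (Fin 2) ℝ) - 2)/2)
        linarith
      have hle := hg₀min (Set.mem_inter h3 hgU)
      simp only [Set.mem_setOf_eq] at hle
      have := min_le_right (1/2 : ℝ) ((nn (↑g₀ : Matrix (Fin 2) (Fin 2) ℝ) - 2)/2)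
      linarith
    · refine ⟨1/2, by norm_num, ?_⟩
      intro g hg
      by_contra hgU
      exact hD ⟨g, Set.mem_inter (by simp only [Set.mem_setOf_eq]; linarith) hgU⟩
  -- the function
  set φ : Matrix.SpecialLinearGroup (Fin 2) ℝ → ℝ :=
    fun g => max 0 (1 - (nn ↑g - 2)/ε) with hφ_def
  set u : Matrix.SpecialLinearGroup (Fin 2) ℝ → ℂ :=
    fun g => (wc ↑g / (‖wc ↑g‖ : ℂ)) ^ k with hu_def
  have hwcne : ∀ g : Matrix.SpecialLinearGroup (Fin 2) ℝ, wc ↑g ≠ 0 :=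
    fun g => wc_ne_zero g.2
  have hbase_ne : ∀ g : Matrix.SpecialLinearGroup (Fin 2) ℝ,
      wc ↑g / (‖wc ↑g‖ : ℂ) ≠ 0 := by
    intro g
    exact div_ne_zero (hwcne g) (Complex.ofReal_ne_zero.mpr (norm_ne_zero_iff.mpr (hwcne g)))
  have hwc_cont : Continuous (fun g : Matrix.SpecialLinearGroup (Fin 2) ℝ => wc ↑g) := by
    have h00 := continuous_sl_coe.matrix_elem 0 0
    have h01 := continuous_sl_coe.matrix_elem 0 1
    have h10 := continuous_sl_coe.matrix_elem 1 0
    have h11 := continuous_sl_coe.matrix_elem 1 1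
    simp only [wc_eq]
    exact (Complex.continuous_ofReal.comp (h00.add h11)).add
      ((Complex.continuous_ofReal.comp (h01.sub h10)).mul continuous_const)
  have hu_cont : Continuous u := by
    refine Continuous.zpow₀ ?_ k (fun g => Or.inl (hbase_ne g))
    exact hwc_cont.div (Complex.continuous_ofReal.comp (continuous_norm.comp hwc_cont))
      fun g => Complex.ofReal_ne_zero.mpr (norm_ne_zero_iff.mpr (hwcne g))
  have hφ_cont : Continuous φ :=
    continuous_const.max (continuous_const.sub ((hn_cont.sub continuous_const).div_const ε))
  have hsupp : Function.support (fun g : Matrix.SpecialLinearGroup (Fin 2) ℝ =>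
      u g * (φ g : ℂ)) ⊆ {g | nn ↑g ≤ 2 + ε} := by
    intro g hg
    by_contra hgt
    simp only [Set.mem_setOf_eq, not_le] at hgt
    apply hg
    have hle : (1 - (nn (↑g : Matrix (Fin 2) (Fin 2) ℝ) - 2)/ε) ≤ 0 := by
      rw [sub_nonpos, le_div_iff₀ hε0]; linarith
    have hφ0 : φ g = 0 := by
      simpa [hφ_def] using max_eq_left hle
    simp [hφ0]
  have hclosed : IsClosed {g : Matrix.SpecialLinearGroup (Fin 2) ℝ | nn ↑g ≤ 2 + ε} :=
    isClosed_le hn_cont continuous_const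
  have hts : tsupport (fun g : Matrix.SpecialLinearGroup (Fin 2) ℝ => u g * (φ g : ℂ)) ⊆
      {g | nn ↑g ≤ 2 + ε} := closure_minimal hsupp hclosed
  refine ⟨fun g => u g * (φ g : ℂ), hu_cont.mul (Complex.continuous_ofReal.comp hφ_cont),
    IsCompact.of_isClosed_subset (isCompact_nn_le (2+ε)) (isClosed_tsupport _) hts,
    fun g hg => hεU g (hts hg), ?_, ?_⟩
  · -- f 1 = 1
    have hcoe1 : ((1 : Matrix.SpecialLinearGroup (Fin 2) ℝ) : Matrix (Fin 2) (Fin 2) ℝ) = 1 :=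
      Matrix.SpecialLinearGroup.coe_one
    have hw1 : wc ((1 : Matrix.SpecialLinearGroup (Fin 2) ℝ) : Matrix (Fin 2) (Fin 2) ℝ) = 2 := by
      rw [hcoe1]; apply Complex.ext <;> simp [wc, Matrix.one_apply] <;> norm_num
    have hnn1 : nn ((1 : Matrix.SpecialLinearGroup (Fin 2) ℝ) : Matrix (Fin 2) (Fin 2) ℝ) = 2 := by
      rw [hcoe1]; simp [nn, Matrix.one_apply]; norm_num
    show u 1 * (φ 1 : ℂ) = 1
    have hu1 : u 1 = 1 := by
      simp only [hu_def, hw1]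
      norm_num
    have hφ1 : φ 1 = 1 := by
      simp only [hφ_def, hnn1]
      norm_num
    rw [hu1, hφ1]; norm_num
  · -- equivariance
    intro g θ₁ θ₂
    have hcoe : ((rotSL θ₁ * g * rotSL θ₂ : Matrix.SpecialLinearGroup (Fin 2) ℝ) :
        Matrix (Fin 2) (Fin 2) ℝ) =
        rotMat θ₁ * (g : Matrix (Fin 2) (Fin 2) ℝ) * rotMat θ₂ := rfl
    have hw : wc ((rotSL θ₁ * g * rotSL θ₂ : Matrix.SpecialLinearGroup (Fin 2) ℝ) :
        Matrix (Fin 2) (Fin 2) ℝ) =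
        Complex.exp ((↑(θ₁ + θ₂) : ℂ) * Complex.I) * wc ↑g := by
      rw [hcoe, wc_mul_rot, wc_rot_mul, ← mul_assoc, ← Complex.exp_add]
      congr 1
      push_cast; ring
    have hnn2 : nn ((rotSL θ₁ * g * rotSL θ₂ : Matrix.SpecialLinearGroup (Fin 2) ℝ) :
        Matrix (Fin 2) (Fin 2) ℝ) = nn ↑g := by
      rw [hcoe, nn_mul_rot, nn_rot_mul]
    have habs : ‖(wc ((rotSL θ₁ * g * rotSL θ₂ :
        Matrix.SpecialLinearGroup (Fin 2) ℝ) : Matrix (Fin 2) (Fin 2) ℝ))‖ =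
        ‖(wc ↑g)‖ := by
      rw [hw, norm_mul, Complex.norm_exp_ofReal_mul_I, one_mul]
    have harg : ((k : ℂ)) * ((↑(θ₁ + θ₂) : ℂ) * Complex.I) =
        Complex.I * k * (↑θ₁ + ↑θ₂) := by push_cast; ring
    have hu2 : u (rotSL θ₁ * g * rotSL θ₂) =
        Complex.exp (Complex.I * k * (θ₁ + θ₂)) * u g := by
      simp only [hu_def]
      rw [habs, hw, mul_div_assoc, mul_zpow, ← Complex.exp_int_mul, harg]
    have hφ2 : φ (rotSL θ₁ * g * rotSL θ₂) = φ g := by simp only [hφ_def, hnn2]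
    show u _ * (φ _ : ℂ) = _ * (u g * (φ g : ℂ))
    rw [hu2, hφ2]; ring
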